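/- Let a, b ∈ {1,...,k}^ℤ and (l_M) a sequence of positive integers tending to infinity. If for every M the set W_M(b) of aligned l_M-blocks of b satisfies #W_M(b) ≤ #B_{l_M}(a), then h(b) ≤ 2 h(a), where h denotes the entropy lim_n (1/n) log #B_n(·). -/

import Mathlib

open Filter Topology

/-- The set of `n`-blocks (words of length `n`) occurring in the two-sided sequence `q`. -/
def blocks (q : ℤ → ℤ) (n : ℕ) : Set (Fin n → ℤ) :=
  {w | ∃ s : ℤ, ∀ i : Fin n, w i = q (s + ((i : ℕ) : ℤ))}

/-- The set of aligned `L`-blocks of `q`, i.e. blocks occurring at positions `r*L`, `r ∈ ℤ`. -/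
def alignedBlocks (q : ℤ → ℤ) (L : ℕ) : Set (Fin L → ℤ) :=
  {w | ∃ r : ℤ, ∀ i : Fin L, w i = q (r * (L : ℤ) + ((i : ℕ) : ℤ))}

/-- The entropy of a sequence: `lim (1/n) log #B_n(q)` (written as a `limsup`). -/
noncomputable def seqEntropy (q : ℤ → ℤ) : ℝ :=
  limsup (fun n : ℕ => Real.log (Nat.card (blocks q n)) / n) atTop

/-- `b` is a Toeplitz sequence: every coordinate repeats along an arithmetic progression. -/
def IsToeplitz (b : ℤ → ℤ) : Prop :=
  ∀ n : ℤ, ∃ l : ℕ, 1 ≤ l ∧ ∀ r : ℤ, b (n + r * (l : ℤ)) = b n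

/-- The average distance of `a` and `b` over the symmetric window `[-N, N]`. -/
noncomputable def avgDist (a b : ℤ → ℤ) (N : ℕ) : ℝ :=
  (∑ n ∈ Finset.Icc (-(N : ℤ)) (N : ℤ), ((|a n - b n| : ℤ) : ℝ)) / (2 * N + 1)

/-! ### Auxiliary lemmas -/

lemma blocks_finite {q : ℤ → ℤ} {k : ℕ} (hq : ∀ n, q n ∈ Set.Icc (1 : ℤ) (k : ℤ)) (n : ℕ) :
    (blocks q n).Finite := by
  apply Set.Finite.subset (Set.Finite.pi (fun _ : Fin n => Set.finite_Icc (1 : ℤ) (k : ℤ)))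
  rintro w ⟨s, hs⟩ i _
  rw [hs i]
  exact hq _

lemma blocks_nonempty (q : ℤ → ℤ) (n : ℕ) : (blocks q n).Nonempty :=
  ⟨fun i => q ((0 : ℤ) + (i : ℕ)), 0, fun _ => rfl⟩

lemma alignedBlocks_subset_blocks (q : ℤ → ℤ) (L : ℕ) :
    alignedBlocks q L ⊆ blocks q L := by
  rintro w ⟨r, hr⟩
  exact ⟨r * L, hr⟩

lemma alignedBlocks_nonempty (q : ℤ → ℤ) (L : ℕ) : (alignedBlocks q L).Nonempty :=
  ⟨fun i => q ((0 : ℤ) * L + (i : ℕ)), 0, fun _ => rfl⟩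

lemma one_le_card_blocks {q : ℤ → ℤ} {k : ℕ} (hq : ∀ n, q n ∈ Set.Icc (1 : ℤ) (k : ℤ)) (n : ℕ) :
    1 ≤ Nat.card (blocks q n) := by
  haveI := (blocks_finite hq n).to_subtype
  haveI := (blocks_nonempty q n).to_subtype
  exact Nat.one_le_iff_ne_zero.mpr (Nat.card_ne_zero.mpr ⟨‹_›, ‹_›⟩)

lemma one_le_card_aligned {q : ℤ → ℤ} {k : ℕ} (hq : ∀ n, q n ∈ Set.Icc (1 : ℤ) (k : ℤ)) (L : ℕ) :
    1 ≤ Nat.card (alignedBlocks q L) := by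
  haveI := ((blocks_finite hq L).subset (alignedBlocks_subset_blocks q L)).to_subtype
  haveI := (alignedBlocks_nonempty q L).to_subtype
  exact Nat.one_le_iff_ne_zero.mpr (Nat.card_ne_zero.mpr ⟨‹_›, ‹_›⟩)

/-- Subadditivity of block counts. -/
lemma card_blocks_add_le {q : ℤ → ℤ} {k : ℕ} (hq : ∀ n, q n ∈ Set.Icc (1 : ℤ) (k : ℤ))
    (m n : ℕ) :
    Nat.card (blocks q (m + n)) ≤ Nat.card (blocks q m) * Nat.card (blocks q n) := by
  classical
  haveI := (blocks_finite hq m).to_subtype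
  haveI := (blocks_finite hq n).to_subtype
  -- decoding
  set dec : (Fin m → ℤ) → (Fin n → ℤ) → (Fin (m + n) → ℤ) := fun u v j =>
    if h : (j : ℕ) < m then u ⟨j, h⟩ else v ⟨(j : ℕ) - m, by omega⟩ with hdecdef
  have hdec : ∀ w : blocks q (m + n), ∃ (u : blocks q m) (v : blocks q n),
      (w : Fin (m + n) → ℤ) = dec u v := by
    rintro ⟨w, s, hs⟩
    refine ⟨⟨fun i => q (s + (i : ℕ)), s, fun _ => rfl⟩,
      ⟨fun i => q (s + (m : ℤ) + (i : ℕ)), s + m, fun _ => rfl⟩, ?_⟩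
    funext j
    show w j = _
    rw [hs j]
    simp only [hdecdef]
    split_ifs with h
    · rfl
    · congr 1
      have : m ≤ (j : ℕ) := le_of_not_gt h
      push_cast [Nat.cast_sub this]
      ring
  choose u v hw using hdec
  have hinj : Function.Injective (fun w : blocks q (m + n) => (u w, v w)) := by
    intro w1 w2 h
    simp only [Prod.mk.injEq] at h
    apply Subtype.ext
    rw [hw w1, hw w2, h.1, h.2]
  calc Nat.card (blocks q (m + n))
      ≤ Nat.card ((blocks q m) × (blocks q n)) := Nat.card_le_card_of_injective _ hinj
    _ = Nat.card (blocks q m) * Nat.card (blocks q n) := Nat.card_prod _ _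

/-- The key combinatorial estimate: `#B_L(q) ≤ L * (#W_L(q))^2`. -/
lemma card_blocks_le_sq {q : ℤ → ℤ} {k : ℕ} (hq : ∀ n, q n ∈ Set.Icc (1 : ℤ) (k : ℤ))
    {L : ℕ} (hL : 1 ≤ L) :
    Nat.card (blocks q L) ≤
      L * (Nat.card (alignedBlocks q L) * Nat.card (alignedBlocks q L)) := by
  classical
  haveI := ((blocks_finite hq L).subset (alignedBlocks_subset_blocks q L)).to_subtype
  have hLpos : (0 : ℤ) < (L : ℤ) := by exact_mod_cast hL
  set dec : Fin L → (Fin L → ℤ) → (Fin L → ℤ) → (Fin L → ℤ) := fun t u v i =>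
    if h : (t : ℕ) + (i : ℕ) < L then u ⟨(t : ℕ) + (i : ℕ), h⟩
    else v ⟨(t : ℕ) + (i : ℕ) - L, by omega⟩ with hdecdef
  have hdec : ∀ w : blocks q L, ∃ (t : Fin L) (u : alignedBlocks q L) (v : alignedBlocks q L),
      (w : Fin L → ℤ) = dec t u v := by
    rintro ⟨w, s, hs⟩
    set r : ℤ := s / (L : ℤ) with hr
    have hst : (L : ℤ) * r + s % (L : ℤ) = s := Int.mul_ediv_add_emod s L
    have hmod0 : 0 ≤ s % (L : ℤ) := Int.emod_nonneg s (by omega)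
    have hmodL : s % (L : ℤ) < L := Int.emod_lt_of_pos s hLpos
    have hts : ((s % (L : ℤ)).toNat : ℤ) = s % (L : ℤ) := Int.toNat_of_nonneg hmod0
    refine ⟨⟨(s % (L : ℤ)).toNat, by omega⟩,
      ⟨fun i => q (r * L + (i : ℕ)), r, fun _ => rfl⟩,
      ⟨fun i => q ((r + 1) * L + (i : ℕ)), r + 1, fun _ => rfl⟩, ?_⟩
    funext i
    show w i = _
    rw [hs i]
    simp only [hdecdef]
    split_ifs with h
    · congr 1
      push_cast
      rw [hts]
      linarith [hst]
    · congr 1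
      have hle : L ≤ (s % (L : ℤ)).toNat + (i : ℕ) := le_of_not_gt h
      push_cast [Nat.cast_sub hle]
      rw [hts]
      linarith [hst]
  choose t u v hw using hdec
  have hinj : Function.Injective (fun w : blocks q L => (t w, u w, v w)) := by
    intro w1 w2 h
    simp only [Prod.mk.injEq] at h
    apply Subtype.ext
    rw [hw w1, hw w2, h.1, h.2.1, h.2.2]
  calc Nat.card (blocks q L)
      ≤ Nat.card (Fin L × (alignedBlocks q L) × (alignedBlocks q L)) :=
        Nat.card_le_card_of_injective _ hinj
    _ = L * (Nat.card (alignedBlocks q L) * Nat.card (alignedBlocks q L)) := by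
        simp [Nat.card_prod, Nat.card_eq_fintype_card]

/-- Crude upper bound: `#B_n(q) ≤ (k+1)^n`. -/
lemma card_blocks_le_pow {q : ℤ → ℤ} {k : ℕ} (hq : ∀ n, q n ∈ Set.Icc (1 : ℤ) (k : ℤ)) (n : ℕ) :
    Nat.card (blocks q n) ≤ (k + 1) ^ n := by
  classical
  have hval : ∀ w : blocks q n, ∀ i : Fin n, ((w : Fin n → ℤ) i).toNat < k + 1 := by
    rintro ⟨w, s, hs⟩ i
    have := hq (s + (i : ℕ))
    simp only [Set.mem_Icc] at this
    have h1 := hs i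
    simp only
    omega
  have hinj : Function.Injective
      (fun w : blocks q n => fun i : Fin n => (⟨((w : Fin n → ℤ) i).toNat, hval w i⟩ : Fin (k + 1))) := by
    intro w1 w2 h
    apply Subtype.ext
    funext i
    have hi := congrFun h i
    simp only [Fin.mk.injEq] at hi
    obtain ⟨s1, hs1⟩ := w1.2
    obtain ⟨s2, hs2⟩ := w2.2
    have hb1 := hq (s1 + (i : ℕ))
    have hb2 := hq (s2 + (i : ℕ))
    simp only [Set.mem_Icc] at hb1 hb2
    have e1 := hs1 i
    have e2 := hs2 i
    omega
  calc Nat.card (blocks q n) ≤ Nat.card (Fin n → Fin (k + 1)) :=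
        Nat.card_le_card_of_injective _ hinj
    _ = (k + 1) ^ n := by simp [Nat.card_fun, Nat.card_eq_fintype_card]

/-- If along scales l_M → ∞ the number of aligned blocks of b is at most the number of
blocks of a, then h(b) ≤ 2 h(a). -/
theorem entropy_le_of_aligned_card (k : ℕ) (hk : 1 ≤ k) (a b : ℤ → ℤ)
    (ha : ∀ n, a n ∈ Set.Icc (1 : ℤ) (k : ℤ)) (hb : ∀ n, b n ∈ Set.Icc (1 : ℤ) (k : ℤ))
    (l : ℕ → ℕ) (hl : ∀ M, 1 ≤ l M) (hlim : Tendsto l atTop atTop)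
    (hcard : ∀ M, Nat.card (alignedBlocks b (l M)) ≤ Nat.card (blocks a (l M))) :
    seqEntropy b ≤ 2 * seqEntropy a := by
  -- basic positivity facts
  have hcb : ∀ n, (1 : ℝ) ≤ (Nat.card (blocks b n) : ℝ) := fun n => by
    exact_mod_cast one_le_card_blocks hb n
  have hca : ∀ n, (1 : ℝ) ≤ (Nat.card (blocks a n) : ℝ) := fun n => by
    exact_mod_cast one_le_card_blocks ha n
  have hcw : ∀ L, (1 : ℝ) ≤ (Nat.card (alignedBlocks b L) : ℝ) := fun L => by
    exact_mod_cast one_le_card_aligned hb L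
  -- Fekete: subadditivity for b
  have hsub : Subadditive (fun n : ℕ => Real.log (Nat.card (blocks b n))) := by
    intro m n
    have h1 := card_blocks_add_le hb m n
    calc Real.log (Nat.card (blocks b (m + n)))
        ≤ Real.log ((Nat.card (blocks b m) : ℝ) * (Nat.card (blocks b n) : ℝ)) := by
          apply Real.log_le_log (by linarith [hcb (m + n)])
          exact_mod_cast h1
      _ = Real.log (Nat.card (blocks b m)) + Real.log (Nat.card (blocks b n)) :=
          Real.log_mul (by linarith [hcb m]) (by linarith [hcb n])
  have hbdd : BddBelow (Set.range fun n : ℕ =>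
      Real.log (Nat.card (blocks b n)) / n) := by
    refine ⟨0, ?_⟩
    rintro x ⟨n, rfl⟩
    exact div_nonneg (Real.log_nonneg (hcb n)) (Nat.cast_nonneg n)
  have hentb : seqEntropy b = hsub.lim :=
    (hsub.tendsto_lim hbdd).limsup_eq
  -- the a-side sequence is bounded above by log (k+1)
  have hbdda : IsBoundedUnder (· ≤ ·) atTop
      (fun n : ℕ => Real.log (Nat.card (blocks a n)) / n) := by
    refine isBoundedUnder_of ⟨Real.log (k + 1), fun n => ?_⟩
    rcases Nat.eq_zero_or_pos n with rfl | hn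
    · simp only [Nat.cast_zero, div_zero]
      exact Real.log_nonneg (by exact_mod_cast Nat.succ_le_succ (Nat.zero_le k))
    · rw [div_le_iff₀ (by exact_mod_cast hn)]
      calc Real.log (Nat.card (blocks a n))
          ≤ Real.log (((k : ℝ) + 1) ^ n) := by
            apply Real.log_le_log (by linarith [hca n])
            exact_mod_cast card_blocks_le_pow ha n
        _ = n * Real.log (k + 1) := by rw [Real.log_pow]
        _ = Real.log (k + 1) * n := by ring
  -- main estimate, via an ε-argument
  refine le_of_forall_pos_le_add fun ε hε => ?_
  have hfa : ∀ᶠ n in atTop,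
      Real.log (Nat.card (blocks a n)) / n < seqEntropy a + ε / 4 :=
    eventually_lt_of_limsup_lt (by unfold seqEntropy; linarith) hbdda
  have hlog0 : Tendsto (fun M => Real.log (l M) / (l M : ℝ)) atTop (𝓝 0) := by
    have h0 : Tendsto (fun x : ℝ => Real.log x / x) atTop (𝓝 0) :=
      Real.isLittleO_log_id_atTop.tendsto_div_nhds_zero
    exact h0.comp (tendsto_natCast_atTop_atTop.comp hlim)
  have h2 : ∀ᶠ M in atTop, Real.log (l M) / (l M : ℝ) < ε / 2 :=
    hlog0.eventually (gt_mem_nhds (by linarith))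
  obtain ⟨M, hM2, hM1⟩ := (h2.and (hlim.eventually hfa)).exists
  set L := l M with hLdef
  have hL1 : 1 ≤ L := hl M
  have hLpos : (0 : ℝ) < (L : ℝ) := by exact_mod_cast hL1
  -- entropy of b is at most the L-th term
  have step1 : seqEntropy b ≤ Real.log (Nat.card (blocks b L)) / L := by
    rw [hentb]
    exact hsub.lim_le_div hbdd (by omega)
  -- the combinatorial estimate at scale L
  have step2 : Real.log (Nat.card (blocks b L)) ≤
      Real.log L + 2 * Real.log (Nat.card (blocks a L)) := by
    have hkey := card_blocks_le_sq hb hL1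
    have hWa : Real.log (Nat.card (alignedBlocks b L)) ≤
        Real.log (Nat.card (blocks a L)) := by
      apply Real.log_le_log (by linarith [hcw L])
      exact_mod_cast hcard M
    have hprod : (0 : ℝ) < (Nat.card (alignedBlocks b L) : ℝ) *
        (Nat.card (alignedBlocks b L) : ℝ) := by nlinarith [hcw L]
    calc Real.log (Nat.card (blocks b L))
        ≤ Real.log ((L : ℝ) * ((Nat.card (alignedBlocks b L) : ℝ) *
            (Nat.card (alignedBlocks b L) : ℝ))) := by
          apply Real.log_le_log (by linarith [hcb L])
          exact_mod_cast hkey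
      _ = Real.log L + (Real.log (Nat.card (alignedBlocks b L)) +
            Real.log (Nat.card (alignedBlocks b L))) := by
          rw [Real.log_mul (by linarith) (ne_of_gt hprod),
            Real.log_mul (by linarith [hcw L]) (by linarith [hcw L])]
      _ ≤ Real.log L + 2 * Real.log (Nat.card (blocks a L)) := by linarith
  calc seqEntropy b ≤ Real.log (Nat.card (blocks b L)) / L := step1
    _ ≤ (Real.log L + 2 * Real.log (Nat.card (blocks a L))) / L := by
        gcongr
    _ = Real.log L / L + 2 * (Real.log (Nat.card (blocks a L)) / L) := by ring
    _ ≤ ε / 2 + 2 * (seqEntropy a + ε / 4) := by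
        have := hM1
        have := hM2
        have hterm : Real.log (Nat.card (blocks a L)) / L ≤ seqEntropy a + ε / 4 :=
          le_of_lt hM1
        nlinarith [hM2]
    _ = 2 * seqEntropy a + ε := by ring
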